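/- In the mixed obstacle problem setting: for every fixed $g \in L^2(\Omega)$, the solutions $u_{g_h}$ of the Robin variational inequality converge strongly in $H^1(\Omega)$ to the solution $u_g$ of the Dirichlet variational inequality as $h \to +\infty$. -/

import Mathlib

open scoped InnerProductSpace
open Filter Topology

private lemma inner_expand_sub {E : Type*} [NormedAddCommGroup E] [InnerProductSpace ℝ E]
    (x y : E) : ⟪x - y, x - y⟫_ℝ = ⟪x, x⟫_ℝ - 2 * ⟪y, x⟫_ℝ + ⟪y, y⟫_ℝ := by
  simp only [inner_sub_left, inner_sub_right]
  rw [real_inner_comm x y]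
  ring

set_option maxHeartbeats 1000000 in
/-- Lemma 4.2: for every fixed source `g`, the solutions `u_{g_h}` of the Robin obstacle
problem converge strongly in `V = H¹(Ω)` to the solution `u_g` of the Dirichlet obstacle
problem as `h → +∞`. -/
theorem stmt_15 {V H B₁ B₂ : Type*}
    [NormedAddCommGroup V] [InnerProductSpace ℝ V] [CompleteSpace V] [Lattice V]
    [NormedAddCommGroup H] [Lattice H] [IsOrderedAddMonoid H] [HasSolidNorm H] [InnerProductSpace ℝ H] [CompleteSpace H]
    [NormedAddCommGroup B₁] [Lattice B₁] [IsOrderedAddMonoid B₁] [HasSolidNorm B₁] [InnerProductSpace ℝ B₁] [CompleteSpace B₁]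
    [NormedAddCommGroup B₂] [Lattice B₂] [IsOrderedAddMonoid B₂] [HasSolidNorm B₂] [InnerProductSpace ℝ B₂] [CompleteSpace B₂]
    (ι : V →L[ℝ] H) (hι : ∀ u v : V, u ≤ v ↔ ι u ≤ ι v)
    (γ₁ : V →L[ℝ] B₁) (γ₂ : V →L[ℝ] B₂)
    (a : V →L[ℝ] V →L[ℝ] ℝ) (hsym : ∀ u v : V, a u v = a v u)
    (lam₁ : ℝ) (hlam₁ : 0 < lam₁)
    (hcoer : ∀ h : ℝ, 0 < h → ∀ v : V,
      lam₁ * min 1 h * ‖v‖ ^ 2 ≤ a v v + h * ⟪γ₁ v, γ₁ v⟫_ℝ)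
    (b : B₁) (q : B₂) (g : H)
    -- the family of Robin solutions u_{g_h}, h > 0
    (u : ℝ → V) (hu₀ : ∀ h : ℝ, 0 < h → 0 ≤ u h)
    (hu : ∀ h : ℝ, 0 < h → ∀ v : V, 0 ≤ v →
      ⟪g, ι (v - u h)⟫_ℝ - ⟪q, γ₂ (v - u h)⟫_ℝ + h * ⟪b, γ₁ (v - u h)⟫_ℝ
        ≤ a (u h) (v - u h) + h * ⟪γ₁ (u h), γ₁ (v - u h)⟫_ℝ)
    -- the Dirichlet solution u_g over K = {v : v|_{Γ₁} = b, v ≥ 0}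
    (uD : V) (huD₀ : 0 ≤ uD) (huDb : γ₁ uD = b)
    (huD : ∀ v : V, 0 ≤ v → γ₁ v = b →
      ⟪g, ι (v - uD)⟫_ℝ - ⟪q, γ₂ (v - uD)⟫_ℝ ≤ a uD (v - uD)) :
    Tendsto u atTop (nhds uD) := by
  classical
  obtain ⟨F, hFdef⟩ : ∃ F : V → ℝ, ∀ v, F v = ⟪g, ι v⟫_ℝ - ⟪q, γ₂ v⟫_ℝ :=
    ⟨_, fun _ => rfl⟩
  have hFsub : ∀ x y : V, F (x - y) = F x - F y := by
    intro x y
    simp only [hFdef, map_sub, inner_sub_right]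
    ring
  -- basic rearrangement of the Robin variational inequality
  have star : ∀ h : ℝ, 0 < h → ∀ v : V, 0 ≤ v →
      F v - F (u h) ≤ a (u h) v - a (u h) (u h)
        + h * (⟪γ₁ (u h), γ₁ v⟫_ℝ - ⟪γ₁ (u h), γ₁ (u h)⟫_ℝ
               - ⟪b, γ₁ v⟫_ℝ + ⟪b, γ₁ (u h)⟫_ℝ) := by
    intro h hh v hv
    have Hvi := hu h hh v hv
    simp only [map_sub, inner_sub_right, ContinuousLinearMap.map_sub] at Hvi
    rw [hFdef, hFdef]
    nlinarith [Hvi]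
  -- nonnegativity of the quadratic form a
  have ha_nonneg : ∀ v : V, 0 ≤ a v v := by
    intro v
    by_contra hneg
    push_neg at hneg
    set c : ℝ := ⟪γ₁ v, γ₁ v⟫_ℝ with hc
    have hc0 : (0:ℝ) ≤ c := real_inner_self_nonneg
    have hden : (0:ℝ) < 2 * (c + 1) := by linarith
    set h : ℝ := min 1 ((-(a v v)) / (2 * (c + 1))) with hh
    have hhpos : 0 < h := lt_min one_pos (div_pos (by linarith) hden)
    have key := hcoer h hhpos v
    rw [min_eq_right (min_le_left _ _)] at key
    have h2 : h ≤ (-(a v v)) / (2 * (c + 1)) := min_le_right _ _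
    have h3 : h * (2 * (c + 1)) ≤ -(a v v) := by
      rw [← le_div_iff₀ hden]; exact h2
    nlinarith [key, mul_nonneg (mul_nonneg hlam₁.le hhpos.le) (sq_nonneg ‖v‖)]
  -- the Robin energy
  obtain ⟨e, hedef⟩ : ∃ e : ℝ → ℝ, ∀ h, e h = (1/2) * a (u h) (u h)
      + (h/2) * ⟪γ₁ (u h) - b, γ₁ (u h) - b⟫_ℝ - F (u h) := ⟨_, fun _ => rfl⟩
  obtain ⟨m, hm⟩ : ∃ m : ℝ, m = (1/2) * a uD uD - F uD := ⟨_, rfl⟩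
  -- energy inequality (minimization property of u h)
  have keyA : ∀ h : ℝ, 0 < h → ∀ v : V, 0 ≤ v →
      e h + (1/2) * a (v - u h) (v - u h)
        + (h/2) * ⟪γ₁ (v - u h), γ₁ (v - u h)⟫_ℝ
      ≤ (1/2) * a v v + (h/2) * ⟪γ₁ v - b, γ₁ v - b⟫_ℝ - F v := by
    intro h hh v hv
    have hstar := star h hh v hv
    have e1 : a (v - u h) (v - u h)
        = a v v - 2 * a (u h) v + a (u h) (u h) := by
      simp only [map_sub, ContinuousLinearMap.sub_apply]
      rw [hsym v (u h)]
      ring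
    have e2 : ⟪γ₁ (v - u h), γ₁ (v - u h)⟫_ℝ
        = ⟪γ₁ v, γ₁ v⟫_ℝ - 2 * ⟪γ₁ (u h), γ₁ v⟫_ℝ + ⟪γ₁ (u h), γ₁ (u h)⟫_ℝ := by
      rw [map_sub]; exact inner_expand_sub _ _
    have e3 : ⟪γ₁ v - b, γ₁ v - b⟫_ℝ
        = ⟪γ₁ v, γ₁ v⟫_ℝ - 2 * ⟪b, γ₁ v⟫_ℝ + ⟪b, b⟫_ℝ := inner_expand_sub _ _
    have e4 : ⟪γ₁ (u h) - b, γ₁ (u h) - b⟫_ℝ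
        = ⟪γ₁ (u h), γ₁ (u h)⟫_ℝ - 2 * ⟪b, γ₁ (u h)⟫_ℝ + ⟪b, b⟫_ℝ := inner_expand_sub _ _
    rw [hedef, e1, e2, e3, e4]
    nlinarith [hstar]
  -- the energy is bounded above by m
  have e_le_m : ∀ h : ℝ, 0 < h → e h ≤ m := by
    intro h hh
    have hA := keyA h hh uD huD₀
    rw [huDb, sub_self] at hA
    simp only [inner_zero_left, mul_zero, add_zero] at hA
    have h1 : 0 ≤ a (uD - u h) (uD - u h) := ha_nonneg _
    have h2 : 0 ≤ ⟪γ₁ (uD - u h), γ₁ (uD - u h)⟫_ℝ := real_inner_self_nonneg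
    rw [hm, hedef h]
    rw [hedef h] at hA
    nlinarith [mul_nonneg hh.le h2]
  -- quantitative monotonicity of the energy
  have mono : ∀ h' h : ℝ, 1 ≤ h' → h' ≤ h →
      e h' + (lam₁ / 2) * ‖u h - u h'‖ ^ 2 ≤ e h := by
    intro h' h h1 hle
    have h'pos : (0:ℝ) < h' := lt_of_lt_of_le one_pos h1
    have hpos : (0:ℝ) < h := lt_of_lt_of_le h'pos hle
    have hA := keyA h' h'pos (u h) (hu₀ h hpos)
    have hI : 0 ≤ ⟪γ₁ (u h) - b, γ₁ (u h) - b⟫_ℝ := real_inner_self_nonneg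
    have hx : (1/2) * a (u h) (u h) + (h'/2) * ⟪γ₁ (u h) - b, γ₁ (u h) - b⟫_ℝ - F (u h)
        ≤ e h := by
      rw [hedef]
      nlinarith [mul_nonneg (sub_nonneg.mpr hle) hI]
    have hc := hcoer 1 one_pos (u h - u h')
    rw [min_self] at hc
    have hd : 0 ≤ ⟪γ₁ (u h - u h'), γ₁ (u h - u h')⟫_ℝ := real_inner_self_nonneg
    nlinarith [hA, hx, hc, mul_nonneg (sub_nonneg.mpr h1) hd]
  -- Cauchy property
  have hcauchy : CauchySeq u := by
    rw [Metric.cauchySeq_iff']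
    intro ε hε
    set S : Set ℝ := e '' (Set.Ici (1:ℝ)) with hS
    have hSne : S.Nonempty := ⟨e 1, 1, Set.self_mem_Ici, rfl⟩
    have hSbdd : BddAbove S := by
      refine ⟨m, ?_⟩
      rintro x ⟨t, ht, rfl⟩
      exact e_le_m t (lt_of_lt_of_le one_pos ht)
    set L : ℝ := sSup S with hL
    have hδ : (0:ℝ) < lam₁ / 2 * ε ^ 2 := by positivity
    obtain ⟨x, hxS, hx⟩ := exists_lt_of_lt_csSup hSne
      (show L - lam₁ / 2 * ε ^ 2 < L by linarith)
    obtain ⟨N, hN1, rfl⟩ := hxS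
    refine ⟨N, fun n hn => ?_⟩
    have hne : e n ≤ L := le_csSup hSbdd ⟨n, le_trans hN1 hn, rfl⟩
    have hmono := mono N n hN1 hn
    have h2 : ‖u n - u N‖ ^ 2 < ε ^ 2 := by nlinarith
    have h3 : ‖u n - u N‖ < ε := lt_of_pow_lt_pow_left₀ 2 hε.le h2
    rwa [dist_eq_norm]
  obtain ⟨w, hw⟩ := cauchySeq_tendsto_of_complete hcauchy
  -- limits of the various continuous quantities
  have ha2 : Continuous fun p : V × V => a p.1 p.2 := a.continuous₂
  have hauu : Tendsto (fun h => a (u h) (u h)) atTop (𝓝 (a w w)) :=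
    (ha2.tendsto (w, w)).comp (hw.prodMk_nhds hw)
  have hFc : Continuous F := by
    have : Continuous fun v : V => ⟪g, ι v⟫_ℝ - ⟪q, γ₂ v⟫_ℝ :=
      (continuous_const.inner ι.continuous).sub (continuous_const.inner γ₂.continuous)
    exact this.congr fun v => (hFdef v).symm
  have hgoal := hFc
  clear hgoal
  have hFu : Tendsto (fun h => F (u h)) atTop (𝓝 (F w)) := (hFc.tendsto w).comp hw
  have hγu : Tendsto (fun h => γ₁ (u h)) atTop (𝓝 (γ₁ w)) := (γ₁.continuous.tendsto w).comp hw
  -- γ₁ w = b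
  have hIb : Tendsto (fun h => ⟪γ₁ (u h) - b, γ₁ (u h) - b⟫_ℝ) atTop (𝓝 0) := by
    have hnum : Tendsto (fun h : ℝ => 2 * (m - ((1/2) * a (u h) (u h) - F (u h))))
        atTop (𝓝 (2 * (m - ((1/2) * a w w - F w)))) := by
      exact (tendsto_const_nhds.sub ((hauu.const_mul _).sub hFu)).const_mul _
    have hub : Tendsto (fun h : ℝ => 2 * (m - ((1/2) * a (u h) (u h) - F (u h))) * h⁻¹)
        atTop (𝓝 0) := by
      simpa using hnum.mul tendsto_inv_atTop_zero
    apply tendsto_of_tendsto_of_tendsto_of_le_of_le' tendsto_const_nhds hub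
    · exact Eventually.of_forall fun h => real_inner_self_nonneg
    · filter_upwards [eventually_gt_atTop (0:ℝ)] with h hh
      have hm' := e_le_m h hh
      rw [hedef h] at hm'
      rw [mul_comm _ h⁻¹, ← div_eq_inv_mul, le_div_iff₀ hh]
      nlinarith [hm']
  have hnb : Tendsto (fun h => γ₁ (u h) - b) atTop (𝓝 0) := by
    rw [tendsto_zero_iff_norm_tendsto_zero]
    have hs : Tendsto (fun h => Real.sqrt ⟪γ₁ (u h) - b, γ₁ (u h) - b⟫_ℝ) atTop (𝓝 0) := by
      have := (Real.continuous_sqrt.tendsto 0).comp hIb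
      simpa only [Real.sqrt_zero, Function.comp_def] using this
    refine hs.congr fun h => ?_
    rw [real_inner_self_eq_norm_sq, Real.sqrt_sq (norm_nonneg _)]
  have hγb : Tendsto (fun h => γ₁ (u h)) atTop (𝓝 b) := by
    have := hnb.add_const b
    simpa using this
  have hgw : γ₁ w = b := tendsto_nhds_unique hγu hγb
  -- w is nonnegative
  have hw0 : (0:V) ≤ w := by
    rw [hι 0 w, map_zero]
    have hclosed : IsClosed {x : H | 0 ≤ x} := isClosed_nonneg
    have hιu : Tendsto (fun h => ι (u h)) atTop (𝓝 (ι w)) := (ι.continuous.tendsto w).comp hw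
    refine hclosed.mem_of_tendsto hιu ?_
    filter_upwards [eventually_gt_atTop (0:ℝ)] with h hh
    have := (hι 0 (u h)).mp (hu₀ h hh)
    simpa using this
  -- pass the variational inequality to the limit at the test point uD
  have hVIlim : F uD - F w ≤ a w uD - a w w := by
    have hstep : ∀ h : ℝ, 0 < h → F uD - F (u h) ≤ a (u h) uD - a (u h) (u h) := by
      intro h hh
      have hs := star h hh uD huD₀
      rw [huDb] at hs
      have hnn : 0 ≤ ⟪γ₁ (u h) - b, γ₁ (u h) - b⟫_ℝ := real_inner_self_nonneg
      have hexp := inner_expand_sub (γ₁ (u h)) b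
      have key : h * (⟪γ₁ (u h), b⟫_ℝ - ⟪γ₁ (u h), γ₁ (u h)⟫_ℝ - ⟪b, b⟫_ℝ + ⟪b, γ₁ (u h)⟫_ℝ)
          = -(h * ⟪γ₁ (u h) - b, γ₁ (u h) - b⟫_ℝ) := by
        rw [hexp, real_inner_comm (γ₁ (u h)) b]
        ring
      rw [key] at hs
      have := mul_nonneg hh.le hnn
      linarith
    have hlhs : Tendsto (fun h => F uD - F (u h)) atTop (𝓝 (F uD - F w)) :=
      tendsto_const_nhds.sub hFu
    have hauD : Tendsto (fun h => a (u h) uD) atTop (𝓝 (a w uD)) :=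
      (ha2.tendsto (w, uD)).comp (hw.prodMk_nhds tendsto_const_nhds)
    have hrhs : Tendsto (fun h => a (u h) uD - a (u h) (u h)) atTop (𝓝 (a w uD - a w w)) :=
      hauD.sub hauu
    refine le_of_tendsto_of_tendsto hlhs hrhs ?_
    filter_upwards [eventually_gt_atTop (0:ℝ)] with h hh
    exact hstep h hh
  -- w solves the Dirichlet VI against uD; use uniqueness
  have hJ : F (w - uD) ≤ a uD (w - uD) := by
    rw [hFdef]; exact huD w hw0 hgw
  rw [hFsub] at hJ
  have hJ' : F w - F uD ≤ a uD w - a uD uD := by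
    have : a uD (w - uD) = a uD w - a uD uD := map_sub _ _ _
    linarith [hJ, this.le, this.ge]
  have hexp2 : a (w - uD) (w - uD) = a w w - a w uD - (a uD w - a uD uD) := by
    simp only [map_sub, ContinuousLinearMap.sub_apply]
    rw [hsym uD w]
  have hswap : a uD w = a w uD := hsym uD w
  have hadd : a (w - uD) (w - uD) ≤ 0 := by
    rw [hexp2]
    linarith [hVIlim, hJ', hswap]
  have hdkernel : γ₁ (w - uD) = 0 := by rw [map_sub, hgw, huDb, sub_self]
  have hcK := hcoer 1 one_pos (w - uD)
  rw [min_self, hdkernel] at hcK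
  simp only [inner_zero_left, mul_zero, add_zero, mul_one, one_mul] at hcK
  have hsq : ‖w - uD‖ ^ 2 ≤ 0 := by nlinarith [hcK, hadd, hlam₁]
  have hnorm0 : ‖w - uD‖ = 0 := by nlinarith [norm_nonneg (w - uD)]
  have hwd : w = uD := by
    have := norm_eq_zero.mp hnorm0
    exact sub_eq_zero.mp this
  rwa [hwd] at hw
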